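/- With A = λ diag(p)^{-1} (p > 0 entrywise, λ > 0) and B = Ẽ of full column rank, the Schur-complement solution of [[A,B],[Bᵀ,0]][∇_c ℓ; −∇_{ab} ℓ] = [−g; 0] is given explicitly by ∇_{ab} ℓ = (Ẽᵀ diag(p) Ẽ)^{-1} Ẽᵀ diag(p) g and ∇_c ℓ = −λ^{-1}(diag(p) g − diag(p) Ẽ ∇_{ab} ℓ). -/

import Mathlib

open Matrix BigOperators

lemma posDef_tDpE {N k : ℕ} (p : Fin N → ℝ) (hp : ∀ i, 0 < p i)
    (E : Matrix (Fin N) (Fin k) ℝ)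
    (hE : LinearIndependent ℝ (fun j : Fin k => fun i : Fin N => E i j)) :
    (Eᵀ * Matrix.diagonal p * E).PosDef := by
  have hD : (Matrix.diagonal p).PosDef := Matrix.PosDef.diagonal hp
  have hinj : Function.Injective (E.mulVec) := Matrix.mulVec_injective_iff.mpr hE
  refine Matrix.PosDef.of_dotProduct_mulVec_pos ?_ ?_
  · rw [Matrix.IsHermitian, Matrix.conjTranspose_eq_transpose_of_trivial,
      Matrix.transpose_mul, Matrix.transpose_mul, Matrix.transpose_transpose,
      Matrix.diagonal_transpose, Matrix.mul_assoc]
  · intro x hx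
    have hEx : E *ᵥ x ≠ 0 := fun h => hx (hinj (by simpa using h))
    have h0 := hD.dotProduct_mulVec_pos (x := E *ᵥ x) hEx
    rw [Matrix.mul_assoc, ← Matrix.mulVec_mulVec, Matrix.dotProduct_mulVec,
      Matrix.vecMul_transpose, ← Matrix.mulVec_mulVec]
    simpa using h0

/-- Explicit Schur-complement solution of the Sinkhorn backward linear system:
with A = λ diag(p)⁻¹ and B = Ẽ, the system
[[A,Ẽ],[Ẽᵀ,0]][∇_c ℓ; −∇_{ab} ℓ] = [−g; 0] has solution
∇_{ab} ℓ = (Ẽᵀ diag p Ẽ)⁻¹ Ẽᵀ diag p g and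
∇_c ℓ = −λ⁻¹ (diag p g − diag p Ẽ ∇_{ab} ℓ). -/
theorem sinkhorn_backward_schur_solution
    (N k : ℕ) (lam : ℝ) (hlam : 0 < lam)
    (p : Fin N → ℝ) (hp : ∀ i, 0 < p i)
    (E : Matrix (Fin N) (Fin k) ℝ)
    (hE : LinearIndependent ℝ (fun j : Fin k => fun i : Fin N => E i j))
    (g gc : Fin N → ℝ) (gab : Fin k → ℝ)
    (hsys : Matrix.fromBlocks (lam • (Matrix.diagonal p)⁻¹) E Eᵀ
        (0 : Matrix (Fin k) (Fin k) ℝ) *ᵥ Sum.elim gc (-gab) = Sum.elim (-g) 0) :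
    gab = (Eᵀ * Matrix.diagonal p * E)⁻¹ *ᵥ (Eᵀ *ᵥ (Matrix.diagonal p *ᵥ g)) ∧
    gc = -lam⁻¹ • (Matrix.diagonal p *ᵥ g
        - Matrix.diagonal p *ᵥ (E *ᵥ gab)) := by
  rw [Matrix.fromBlocks_mulVec] at hsys
  have h1 : (lam • (Matrix.diagonal p)⁻¹) *ᵥ gc + E *ᵥ (-gab) = -g := by
    have := congrArg (· ∘ Sum.inl) hsys
    simpa using this
  have h2 : Eᵀ *ᵥ gc = 0 := by
    have := congrArg (· ∘ Sum.inr) hsys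
    simpa using this
  -- invertibility of diagonal p
  have hpne : ∀ i, p i ≠ 0 := fun i => (hp i).ne'
  have hDinv : Matrix.diagonal p * (Matrix.diagonal p)⁻¹ = 1 := by
    rw [Matrix.mul_nonsing_inv]
    simpa [Matrix.det_diagonal] using Finset.prod_ne_zero_iff.mpr fun i _ => hpne i
  -- solve for gc
  have hgc : gc = -lam⁻¹ • (Matrix.diagonal p *ᵥ g
      - Matrix.diagonal p *ᵥ (E *ᵥ gab)) := by
    have h1' : lam • ((Matrix.diagonal p)⁻¹ *ᵥ gc) = E *ᵥ gab - g := by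
      rw [Matrix.smul_mulVec] at h1
      have := h1
      rw [Matrix.mulVec_neg] at this
      linear_combination (norm := module) this
    have hD : Matrix.diagonal p *ᵥ ((Matrix.diagonal p)⁻¹ *ᵥ gc) = gc := by
      rw [Matrix.mulVec_mulVec, hDinv, Matrix.one_mulVec]
    have := congrArg (fun v => lam⁻¹ • (Matrix.diagonal p *ᵥ v)) h1'
    simp only [Matrix.mulVec_smul, hD, Matrix.mulVec_sub] at this
    rw [smul_smul, inv_mul_cancel₀ hlam.ne', one_smul] at this
    rw [this]
    module
  refine ⟨?_, hgc⟩
  -- solve for gab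
  have hM := posDef_tDpE p hp E hE
  have hMinv : (Eᵀ * Matrix.diagonal p * E)⁻¹ * (Eᵀ * Matrix.diagonal p * E) = 1 :=
    Matrix.nonsing_inv_mul _ hM.det_pos.ne'.isUnit
  have h2' : Eᵀ *ᵥ (Matrix.diagonal p *ᵥ (E *ᵥ gab)) = Eᵀ *ᵥ (Matrix.diagonal p *ᵥ g) := by
    rw [hgc] at h2
    have := h2
    simp only [Matrix.mulVec_smul, Matrix.mulVec_sub, smul_eq_zero] at this
    rcases this with h | h
    · exact absurd h (by simp [hlam.ne'])
    · exact (sub_eq_zero.mp h).symm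
  have : (Eᵀ * Matrix.diagonal p * E) *ᵥ gab = Eᵀ *ᵥ (Matrix.diagonal p *ᵥ g) := by
    rw [← h2']; simp [Matrix.mulVec_mulVec, Matrix.mul_assoc]
  calc gab = ((Eᵀ * Matrix.diagonal p * E)⁻¹ * (Eᵀ * Matrix.diagonal p * E)) *ᵥ gab := by
        rw [hMinv, Matrix.one_mulVec]
    _ = (Eᵀ * Matrix.diagonal p * E)⁻¹ *ᵥ (Eᵀ *ᵥ (Matrix.diagonal p *ᵥ g)) := by
        rw [← Matrix.mulVec_mulVec, this]
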